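/- The set of positive integers t for which t^2 + 1 is squarefree has positive lower density; in particular, there are infinitely many positive integers t such that t^2 + 1 is squarefree. -/

import Mathlib

open Finset


/-- Elements of [1,N] lying in a single residue class mod m number at most N/m+1. -/
lemma card_cong_le (N m : ℕ) (hm : 0 < m) (P : ℕ → Prop) [DecidablePred P]
    (h : ∀ a ∈ (Icc 1 N).filter P, ∀ b ∈ (Icc 1 N).filter P, a ≤ b → m ∣ b - a) :
    ((Icc 1 N).filter P).card ≤ N / m + 1 := by
  rcases ((Icc 1 N).filter P).eq_empty_or_nonempty with he | hne
  · simp [he]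
  obtain ⟨t₀, ht₀, hmin⟩ := ((Icc 1 N).filter P).exists_min_image id hne
  have key : ∀ t ∈ (Icc 1 N).filter P, (t - t₀) / m ∈ range (N / m + 1) := by
    intro t ht
    have h1 : t ≤ N := (mem_Icc.1 (mem_filter.1 ht).1).2
    have : (t - t₀) / m ≤ N / m := Nat.div_le_div_right (by omega)
    simpa [Nat.lt_succ_iff] using this
  have inj : ∀ a ∈ (Icc 1 N).filter P, ∀ b ∈ (Icc 1 N).filter P,
      (a - t₀) / m = (b - t₀) / m → a = b := by
    intro a ha b hb hab
    have hta := hmin a ha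
    have htb := hmin b hb
    simp only [id] at hta htb
    rcases le_total a b with hle | hle
    · have hd : m ∣ b - a := h a ha b hb hle
      have hd2 : m ∣ b - t₀ := (h t₀ ht₀ b hb htb)
      have hd1 : m ∣ a - t₀ := (h t₀ ht₀ a ha hta)
      have e1 : (a - t₀) = m * ((a - t₀)/m) := (Nat.mul_div_cancel' hd1).symm
      have e2 : (b - t₀) = m * ((b - t₀)/m) := (Nat.mul_div_cancel' hd2).symm
      have e3 : m * ((a - t₀)/m) = m * ((b - t₀)/m) := by rw [hab]
      omega
    · have hd : m ∣ a - b := h b hb a ha hle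
      have hd2 : m ∣ b - t₀ := (h t₀ ht₀ b hb htb)
      have hd1 : m ∣ a - t₀ := (h t₀ ht₀ a ha hta)
      have e1 : (a - t₀) = m * ((a - t₀)/m) := (Nat.mul_div_cancel' hd1).symm
      have e2 : (b - t₀) = m * ((b - t₀)/m) := (Nat.mul_div_cancel' hd2).symm
      have e3 : m * ((a - t₀)/m) = m * ((b - t₀)/m) := by rw [hab]
      omega
  calc ((Icc 1 N).filter P).card ≤ (range (N/m+1)).card :=
        Finset.card_le_card_of_injOn (fun t => (t - t₀)/m) key inj
    _ = N / m + 1 := by simp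


lemma int_cong_of_sq_dvd {p a t : ℤ} (hp : Prime p) (hodd : ¬ p ∣ (2:ℤ))
    (ha : p^2 ∣ a^2 + 1) (ht : p^2 ∣ t^2 + 1) :
    p^2 ∣ t - a ∨ p^2 ∣ t + a := by
  have hd : p^2 ∣ (t - a) * (t + a) := by
    have : (t - a) * (t + a) = (t^2 + 1) - (a^2 + 1) := by ring
    rw [this]; exact dvd_sub ht ha
  have hnot : ¬ (p ∣ t - a ∧ p ∣ t + a) := by
    rintro ⟨h1, h2⟩
    have h3 : p ∣ 2 * t := by have := dvd_add h1 h2; rwa [show t - a + (t + a) = 2 * t by ring] at this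
    have h4 : p ∣ t := by
      rcases hp.dvd_mul.1 h3 with h | h
      · exact absurd h hodd
      · exact h
    have h5 : p ∣ t^2 + 1 := dvd_trans (dvd_pow_self p two_ne_zero) ht
    have h6 : p ∣ (1:ℤ) := by
      have hsq : p ∣ t^2 := by rw [sq]; exact h4.mul_right t
      have := dvd_sub h5 hsq
      simpa using this
    exact hp.not_unit (isUnit_of_dvd_one h6)
  rcases (Classical.em (p ∣ t + a)) with h | h
  · have hc : IsCoprime p (t - a) := hp.coprime_iff_not_dvd.2 (fun hx => hnot ⟨hx, h⟩)
    have : IsCoprime (p^2) (t - a) := hc.pow_left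
    right
    exact this.dvd_of_dvd_mul_left hd
  · have hc : IsCoprime p (t + a) := hp.coprime_iff_not_dvd.2 h
    have : IsCoprime (p^2) (t + a) := hc.pow_left
    left
    exact this.dvd_of_dvd_mul_right hd

lemma card_sq_dvd_le (N p : ℕ) (hp : p.Prime) (hodd : p % 2 = 1) :
    ((Icc 1 N).filter (fun t => p^2 ∣ t^2 + 1)).card ≤ 2 * (N / p^2 + 1) := by
  have hm : 0 < p^2 := pow_pos hp.pos 2
  rcases ((Icc 1 N).filter (fun t => p^2 ∣ t^2 + 1)).eq_empty_or_nonempty with he | ⟨a, ha⟩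
  · simp [he]
  have hadvd : p^2 ∣ a^2 + 1 := (mem_filter.1 ha).2
  have hpz : Prime (p : ℤ) := Nat.prime_iff_prime_int.1 hp
  have hoddz : ¬ (p:ℤ) ∣ 2 := by
    rw [show ((2:ℤ)) = ((2:ℕ):ℤ) by norm_num, Int.natCast_dvd_natCast]
    intro h
    have := (Nat.prime_dvd_prime_iff_eq hp Nat.prime_two).1 h
    omega
  have hsub : (Icc 1 N).filter (fun t => p^2 ∣ t^2 + 1) ⊆
      (Icc 1 N).filter (fun t => a ≡ t [MOD p^2]) ∪
      (Icc 1 N).filter (fun t => p^2 ∣ t + a) := by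
    intro t ht
    have htI := (mem_filter.1 ht).1
    have htd : p^2 ∣ t^2 + 1 := (mem_filter.1 ht).2
    have haz : ((p:ℤ))^2 ∣ (a:ℤ)^2 + 1 := by
      have := Int.natCast_dvd_natCast.2 hadvd; push_cast at this ⊢; exact this
    have htz : ((p:ℤ))^2 ∣ (t:ℤ)^2 + 1 := by
      have := Int.natCast_dvd_natCast.2 htd; push_cast at this ⊢; exact this
    rcases int_cong_of_sq_dvd hpz hoddz haz htz with h | h
    · refine mem_union_left _ (mem_filter.2 ⟨htI, ?_⟩)
      rw [Nat.modEq_iff_dvd]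
      exact_mod_cast h
    · refine mem_union_right _ (mem_filter.2 ⟨htI, ?_⟩)
      have : ((p^2 : ℕ):ℤ) ∣ ((t + a : ℕ):ℤ) := by push_cast; exact_mod_cast h
      exact_mod_cast this
  calc ((Icc 1 N).filter (fun t => p^2 ∣ t^2 + 1)).card
      ≤ (((Icc 1 N).filter (fun t => a ≡ t [MOD p^2])) ∪
         ((Icc 1 N).filter (fun t => p^2 ∣ t + a))).card := card_le_card hsub
    _ ≤ ((Icc 1 N).filter (fun t => a ≡ t [MOD p^2])).card +
        ((Icc 1 N).filter (fun t => p^2 ∣ t + a)).card := card_union_le _ _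
    _ ≤ (N / p^2 + 1) + (N / p^2 + 1) := by
        gcongr
        · exact card_cong_le N (p^2) hm _ (by
            intro x hx y hy hxy
            have hx' := (mem_filter.1 hx).2
            have hy' := (mem_filter.1 hy).2
            have : x ≡ y [MOD p^2] := hx'.symm.trans hy'
            exact (Nat.modEq_iff_dvd' hxy).1 this)
        · exact card_cong_le N (p^2) hm _ (by
            intro x hx y hy hxy
            have hx' := (mem_filter.1 hx).2
            have hy' := (mem_filter.1 hy).2
            have := Nat.dvd_sub hy' hx'
            simpa [Nat.add_sub_add_right] using this)
    _ = 2 * (N / p^2 + 1) := by ring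


lemma tail_sum_le (a : ℕ) (ha : 1 ≤ a) (K : ℕ) :
    (∑ n ∈ Icc (a+1) K, (1 : ℝ) / (n:ℝ)^2) ≤ 1/a := by
  rcases lt_or_ge K a with h | h
  · rw [Icc_eq_empty (by omega)]
    simp only [sum_empty]
    positivity
  have key : ∀ K, a ≤ K → (∑ n ∈ Icc (a+1) K, (1 : ℝ) / (n:ℝ)^2) ≤ 1/a - 1/K := by
    intro K hK
    induction K, hK using Nat.le_induction with
    | base => rw [Icc_eq_empty (by omega)]; simp
    | succ K hK ih =>
      have hins : Icc (a+1) (K+1) = insert (K+1) (Icc (a+1) K) := by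
        ext x; simp [Finset.mem_Icc]; omega
      rw [hins, Finset.sum_insert (by simp)]
      have hKpos : (0:ℝ) < (K:ℝ) := by exact_mod_cast Nat.lt_of_lt_of_le ha hK
      have h2 : (1:ℝ) / ((K:ℝ)+1)^2 ≤ 1/(K:ℝ) - 1/((K:ℝ)+1) := by
        rw [div_sub_div _ _ (ne_of_gt hKpos) (by positivity)]
        rw [div_le_div_iff₀ (by positivity) (by positivity)]
        ring_nf
        nlinarith
      have := ih
      push_cast
      linarith
  have := key K h
  have : (1:ℝ)/K ≥ 0 := by positivity
  linarith [key K h]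

lemma prime_sum_le (K : ℕ) :
    (∑ p ∈ (Icc 1 K).filter (fun p => p.Prime ∧ p % 4 = 1), (1 : ℝ) / (p:ℝ)^2)
      ≤ 9/100 := by
  have hsub : (Icc 1 K).filter (fun p => p.Prime ∧ p % 4 = 1) ⊆
      ({5, 13, 17} : Finset ℕ) ∪ Icc 29 K := by
    intro p hp
    obtain ⟨hpI, hpp, hp4⟩ := by simpa [Finset.mem_filter, Finset.mem_Icc] using hp
    simp only [Finset.mem_union, Finset.mem_insert, Finset.mem_singleton, Finset.mem_Icc]
    rcases lt_or_ge p 29 with h | h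
    · left
      interval_cases p <;> revert hpp hp4 <;> decide
    · right; omega
  have hd : Disjoint ({5, 13, 17} : Finset ℕ) (Icc 29 K) := by
    simp [Finset.disjoint_left, Finset.mem_Icc]
  calc (∑ p ∈ (Icc 1 K).filter (fun p => p.Prime ∧ p % 4 = 1), (1 : ℝ) / (p:ℝ)^2)
      ≤ ∑ p ∈ ({5, 13, 17} : Finset ℕ) ∪ Icc 29 K, (1 : ℝ) / (p:ℝ)^2 := by
        apply Finset.sum_le_sum_of_subset_of_nonneg hsub
        intro i _ _; positivity
    _ = (∑ p ∈ ({5, 13, 17} : Finset ℕ), (1 : ℝ) / (p:ℝ)^2)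
        + ∑ p ∈ Icc 29 K, (1 : ℝ) / (p:ℝ)^2 := Finset.sum_union hd
    _ ≤ (1/25 + 1/169 + 1/289) + 1/28 := by
        gcongr
        · norm_num
        · exact tail_sum_le 28 (by norm_num) K
    _ ≤ 9/100 := by norm_num


lemma bad_subset (N : ℕ) :
    (Icc 1 N).filter (fun t => ¬ Squarefree (t^2+1)) ⊆
      ((Icc 1 N).filter (fun p => p.Prime ∧ p % 4 = 1)).biUnion
        (fun p => (Icc 1 N).filter (fun t => p^2 ∣ t^2 + 1)) := by
  intro t ht
  obtain ⟨htI, hns⟩ := mem_filter.1 ht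
  obtain ⟨ht1, htN⟩ := mem_Icc.1 htI
  rw [Nat.squarefree_iff_prime_squarefree] at hns
  push_neg at hns
  obtain ⟨p, hpp, hdvd⟩ := hns
  have hp : p.Prime := hpp
  have hdvd2 : p^2 ∣ t^2 + 1 := by rwa [sq]
  have hpdvd : p ∣ t^2 + 1 := dvd_trans (dvd_mul_right p p) hdvd
  have hp2 : p ≠ 2 := by
    rintro rfl
    have h4 : 4 ∣ t^2 + 1 := hdvd
    rcases Nat.even_or_odd t with ⟨k, hk⟩ | ⟨k, hk⟩ <;> subst hk <;>
      · ring_nf at h4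
        omega
  have hodd : p % 2 = 1 := Nat.odd_iff.1 (hp.odd_of_ne_two hp2)
  haveI : Fact p.Prime := ⟨hp⟩
  have hmod4 : p % 4 = 1 := by
    have hz : ((t^2 + 1 : ℕ) : ZMod p) = 0 := (ZMod.natCast_eq_zero_iff _ _).2 hpdvd
    push_cast at hz
    have hsq : IsSquare (-1 : ZMod p) := ⟨(t : ZMod p), by
      have : ((t : ZMod p))^2 = -1 := by linear_combination hz
      rw [← this]; ring⟩
    have h3 := ZMod.exists_sq_eq_neg_one_iff.1 hsq
    omega
  have hpN : p ≤ N := by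
    have h1 : p * p ≤ t^2 + 1 := Nat.le_of_dvd (by positivity) hdvd
    have h2 : t^2 ≤ N^2 := Nat.pow_le_pow_left htN 2
    nlinarith
  refine Finset.mem_biUnion.2 ⟨p, ?_, ?_⟩
  · exact mem_filter.2 ⟨mem_Icc.2 ⟨hp.one_lt.le.trans' (by omega), hpN⟩, hp, hmod4⟩
  · exact mem_filter.2 ⟨htI, hdvd2⟩

lemma main_bound (N : ℕ) (hN : 10000 ≤ N) :
    (N : ℝ)/4 ≤ (((Icc 1 N).filter (fun t => Squarefree (t^2+1))).card : ℝ) := by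
  set K := Nat.sqrt N with hK
  set P := (Icc 1 N).filter (fun p => p.Prime ∧ p % 4 = 1) with hP
  set Ps := P.filter (fun p => p ≤ K) with hPs
  set Pl := P.filter (fun p => ¬ p ≤ K) with hPl
  set bad := (Icc 1 N).filter (fun t => ¬ Squarefree (t^2+1)) with hbad
  set good := (Icc 1 N).filter (fun t => Squarefree (t^2+1)) with hgood
  -- good + bad = N
  have hsplitN : good.card + bad.card = N := by
    rw [hgood, hbad, Finset.card_filter_add_card_filter_not, Nat.card_Icc]
    omega
  -- step 1: cover
  have h1 : bad.card ≤ ∑ p ∈ P, ((Icc 1 N).filter (fun t => p^2 ∣ t^2 + 1)).card :=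
    (Finset.card_le_card (bad_subset N)).trans (Finset.card_biUnion_le)
  have hsum : ∑ p ∈ P, ((Icc 1 N).filter (fun t => p^2 ∣ t^2 + 1)).card
      = ∑ p ∈ Ps, ((Icc 1 N).filter (fun t => p^2 ∣ t^2 + 1)).card
      + ∑ p ∈ Pl, ((Icc 1 N).filter (fun t => p^2 ∣ t^2 + 1)).card :=
    (Finset.sum_filter_add_sum_filter_not P _ _).symm
  -- small primes
  have hmem : ∀ p ∈ P, p.Prime ∧ p % 4 = 1 := fun p hp => (mem_filter.1 hp).2
  have h3 : ∑ p ∈ Ps, ((Icc 1 N).filter (fun t => p^2 ∣ t^2 + 1)).card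
      ≤ ∑ p ∈ Ps, 2 * (N / p^2 + 1) := by
    apply Finset.sum_le_sum
    intro p hp
    obtain ⟨hpp, hp4⟩ := hmem p (Finset.filter_subset _ _ hp)
    exact card_sq_dvd_le N p hpp (by omega)
  -- large primes
  have h4 : ∑ p ∈ Pl, ((Icc 1 N).filter (fun t => p^2 ∣ t^2 + 1)).card
      ≤ 2 * Pl.card := by
    rw [Finset.card_eq_sum_ones Pl, Finset.mul_sum]
    apply Finset.sum_le_sum
    intro p hp
    obtain ⟨hpp, hp4⟩ := hmem p (Finset.filter_subset _ _ hp)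
    have hK' : ¬ p ≤ K := (mem_filter.1 hp).2
    have hdiv0 : N / p^2 = 0 := by
      apply Nat.div_eq_of_lt
      calc N < (K+1) * (K+1) := Nat.lt_succ_sqrt N
        _ ≤ p * p := Nat.mul_le_mul (by omega) (by omega)
        _ = p^2 := (sq p).symm
    have := card_sq_dvd_le N p hpp (by omega)
    rw [hdiv0] at this
    omega
  have h5 : Pl.card ≤ N / 4 + 1 := by
    have hsub : Pl ⊆ (Icc 1 N).filter (fun n => n % 4 = 1) := by
      intro p hp
      have h1 := (Finset.filter_subset _ _ hp)
      exact mem_filter.2 ⟨(mem_filter.1 h1).1, (hmem p h1).2⟩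
    refine (Finset.card_le_card hsub).trans ?_
    apply card_cong_le N 4 (by norm_num)
    intro a ha b hb hab
    have h1 := (mem_filter.1 ha).2
    have h2 := (mem_filter.1 hb).2
    omega
  -- K bound
  have hK100 : K * 100 ≤ N := by
    have h100 : 100 ≤ K := by
      rw [hK, Nat.le_sqrt]
      omega
    have h2 : K^2 ≤ N := Nat.sqrt_le' N
    nlinarith
  have hPsK : Ps.card ≤ K := by
    have hsub : Ps ⊆ Icc 1 K := by
      intro p hp
      have h1 := Finset.filter_subset _ _ hp
      have h2 : p ≤ K := (mem_filter.1 hp).2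
      have h3 := mem_Icc.1 (mem_filter.1 h1).1
      exact mem_Icc.2 ⟨h3.1, h2⟩
    simpa [Nat.card_Icc] using Finset.card_le_card hsub
  -- real bounds
  have hNR : (0:ℝ) < (N:ℝ) := by positivity
  have hsmallR : ((∑ p ∈ Ps, 2 * (N / p^2 + 1) : ℕ) : ℝ)
      ≤ 2 * (N:ℝ) * (9/100) + 2 * (K:ℝ) := by
    push_cast
    have hterm : ∀ p ∈ Ps, 2 * ((((N / p^2 : ℕ)):ℝ) + 1)
        ≤ 2 * (N:ℝ) * (1 / (p:ℝ)^2) + 2 := by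
      intro p hp
      have := Nat.cast_div_le (α := ℝ) (m := N) (n := p^2)
      push_cast at this
      have hppos : (0:ℝ) < (p:ℝ) := by
        have := (hmem p (Finset.filter_subset _ _ hp)).1.pos
        exact_mod_cast this
      have : ((N / p^2 : ℕ) : ℝ) ≤ (N:ℝ) * (1/(p:ℝ)^2) := by
        rw [mul_one_div]
        exact this
      linarith
    calc (∑ p ∈ Ps, 2 * (((N / p^2 : ℕ):ℝ) + 1))
        ≤ ∑ p ∈ Ps, (2 * (N:ℝ) * (1 / (p:ℝ)^2) + 2) := Finset.sum_le_sum hterm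
      _ = 2 * (N:ℝ) * (∑ p ∈ Ps, 1 / (p:ℝ)^2) + 2 * Ps.card := by
          rw [Finset.sum_add_distrib, ← Finset.mul_sum, Finset.sum_const]
          push_cast; ring
      _ ≤ 2 * (N:ℝ) * (9/100) + 2 * (K:ℝ) := by
          have hs : (∑ p ∈ Ps, 1/(p:ℝ)^2) ≤ 9/100 := by
            refine le_trans (Finset.sum_le_sum_of_subset_of_nonneg ?_
              (fun i _ _ => by positivity)) (prime_sum_le K)
            intro p hp
            have h2 : p ≤ K := (mem_filter.1 hp).2
            have h1 := Finset.filter_subset _ _ hp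
            have h3 := mem_Icc.1 (mem_filter.1 h1).1
            exact mem_filter.2 ⟨mem_Icc.2 ⟨h3.1, h2⟩, hmem p h1⟩
          have hc : (Ps.card : ℝ) ≤ (K:ℝ) := by exact_mod_cast hPsK
          have hmul := mul_le_mul_of_nonneg_left hs (by positivity : (0:ℝ) ≤ 2*(N:ℝ))
          nlinarith
  -- combine in ℕ then ℝ
  have hbadN : bad.card ≤ (∑ p ∈ Ps, 2 * (N / p^2 + 1)) + 2 * (N / 4 + 1) := by
    calc bad.card ≤ _ := h1
      _ = _ := hsum
      _ ≤ (∑ p ∈ Ps, 2 * (N / p^2 + 1)) + 2 * Pl.card := by omega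
      _ ≤ (∑ p ∈ Ps, 2 * (N / p^2 + 1)) + 2 * (N / 4 + 1) := by omega
  have hbadR : (bad.card : ℝ) ≤ 2 * (N:ℝ) * (9/100) + 2 * (K:ℝ) + 2 * ((N:ℝ)/4 + 1) := by
    have hc : ((bad.card : ℕ) : ℝ) ≤ ((∑ p ∈ Ps, 2 * (N / p^2 + 1)) + 2 * (N / 4 + 1) : ℕ) := by
      exact_mod_cast hbadN
    have hN4 : ((N / 4 : ℕ) : ℝ) ≤ (N:ℝ)/4 := Nat.cast_div_le
    calc (bad.card : ℝ) ≤ _ := hc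
      _ = ((∑ p ∈ Ps, 2 * (N / p^2 + 1) : ℕ) : ℝ) + 2 * (((N / 4 : ℕ)):ℝ) + 2 := by
          push_cast; ring
      _ ≤ (2 * (N:ℝ) * (9/100) + 2 * (K:ℝ)) + 2 * ((N:ℝ)/4) + 2 := by
          gcongr
      _ = 2 * (N:ℝ) * (9/100) + 2 * (K:ℝ) + 2 * ((N:ℝ)/4 + 1) := by ring
  have hKR : (K:ℝ) ≤ (N:ℝ)/100 := by
    rw [le_div_iff₀ (by norm_num)]
    exact_mod_cast hK100
  have hgoodR : (good.card : ℝ) = (N:ℝ) - bad.card := by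
    have : (good.card : ℝ) + bad.card = N := by exact_mod_cast hsplitN
    linarith
  have hNbig : (10000:ℝ) ≤ (N:ℝ) := by exact_mod_cast hN
  rw [hgoodR]
  linarith

theorem squarefree_sq_add_one_positive_density :
    (∃ c : ℝ, 0 < c ∧
      c ≤ Filter.liminf
        (fun N : ℕ =>
          (((Finset.Icc 1 N).filter (fun t => Squarefree (t ^ 2 + 1))).card : ℝ) / N)
        Filter.atTop) ∧
    {t : ℕ | 0 < t ∧ Squarefree (t ^ 2 + 1)}.Infinite := by
  set u : ℕ → ℝ := fun N =>
    (((Finset.Icc 1 N).filter (fun t => Squarefree (t ^ 2 + 1))).card : ℝ) / N with hu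
  have hev : ∀ᶠ N in Filter.atTop, (1/4 : ℝ) ≤ u N := by
    rw [Filter.eventually_atTop]
    refine ⟨10000, fun N hN => ?_⟩
    have hNpos : (0:ℝ) < (N:ℝ) := by
      have : 0 < N := by omega
      exact_mod_cast this
    have hmb := main_bound N hN
    rw [hu]
    rw [le_div_iff₀ hNpos]
    calc (1/4 : ℝ) * N = (N:ℝ)/4 := by ring
      _ ≤ _ := by
          convert hmb using 3 <;> norm_num
  constructor
  · refine ⟨1/4, by norm_num, Filter.le_liminf_of_le ?_ hev⟩
    apply Filter.IsBoundedUnder.isCoboundedUnder_ge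
    refine ⟨1, Filter.eventually_map.2 (Filter.Eventually.of_forall fun N => ?_)⟩
    rw [hu]
    rcases Nat.eq_zero_or_pos N with rfl | hN
    · norm_num
    have h1 : (((Finset.Icc 1 N).filter (fun t => Squarefree (t ^ 2 + 1))).card : ℝ) ≤ N := by
      have := Finset.card_le_card (Finset.filter_subset
        (fun t => Squarefree (t ^ 2 + 1)) (Finset.Icc 1 N))
      rw [Nat.card_Icc] at this
      exact_mod_cast this.trans (by omega)
    have hNpos : (0:ℝ) < (N:ℝ) := by exact_mod_cast hN
    rw [div_le_one hNpos]
    exact h1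
  · by_contra hninf
    rw [Set.not_infinite] at hninf
    have hfin := hninf
    set k := hfin.toFinset.card with hk
    set N := 10000 + 4 * k with hN
    have hmb := main_bound N (by omega)
    have hsub : (Finset.Icc 1 N).filter (fun t => Squarefree (t ^ 2 + 1)) ⊆
        hfin.toFinset := by
      intro t ht
      obtain ⟨htI, hts⟩ := Finset.mem_filter.1 ht
      have h1 := (Finset.mem_Icc.1 htI).1
      rw [Set.Finite.mem_toFinset]
      exact ⟨by omega, hts⟩
    have hle : ((Finset.Icc 1 N).filter (fun t => Squarefree (t ^ 2 + 1))).card ≤ k :=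
      Finset.card_le_card hsub
    have hleR : (((Finset.Icc 1 N).filter (fun t => Squarefree (t ^ 2 + 1))).card : ℝ)
        ≤ (k:ℝ) := by exact_mod_cast hle
    have hNk : (N:ℝ) = 10000 + 4 * (k:ℝ) := by rw [hN]; push_cast; ring
    linarith
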